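/- In the carry-bit recursion for the kernel function: if (α_i, β_i, ỹ_i) ∈ {(0,1,0),(1,0,0)} (i.e., 4α_i + 2β_i + ỹ_i ∈ {2,4}), then the pair (x_i, c_i) is constrained by: ỹ_{i+1} = 0 implies x_i = c_i, and ỹ_{i+1} = 1 implies x_i ≠ c_i. In particular if c_i is known then x_i = ỹ_{i+1} XOR c_i. -/
import Mathlib


theorem stmt_8 (a b x c y : Bool)
    (hcase : (a, b, y) = (false, true, false) ∨ (a, b, y) = (true, false, false)) :
    let y' := ((((x && a) ^^ (x && c)) ^^ (a && c)) ^^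
          (((x && b) ^^ (x && (c ^^ y))) ^^ (b && (c ^^ y))))
    (y' = false → x = c) ∧ (y' = true → x ≠ c) ∧ x = (y' ^^ c) := by
  revert hcase; cases a <;> cases b <;> cases x <;> cases c <;> cases y <;> decide
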